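/- Let (Xₙ) be a random walk with P(ξ > 0) > 0, q ≥ 0, and g : ℝ → [0,∞) nonconstant, increasing, logconcave. Suppose E_y[e^{-q T_y} g(X_{T_y}) 1_{T_y<∞}] ≤ g(y) for some y > x₀ := inf{s : g(s) > 0}. Then g(y) ≥ E_y[e^{-q τ_a} g(X_{τ_a}) 1_{τ_a<∞}] for every a > y. -/

import Mathlib

open MeasureTheory ProbabilityTheory Real

variable {Ω : Type*}

/-- The random walk `X n = x + ξ 1 + ... + ξ n` (increments indexed from 1). -/
noncomputable def walk (x : ℝ) (ξ : ℕ → Ω → ℝ) (n : ℕ) (ω : Ω) : ℝ :=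
  x + ∑ i ∈ Finset.range n, ξ (i + 1) ω

/-- `τ_v`: first time `n ≥ 0` with `X n ≥ v` (`⊤` if never). -/
noncomputable def hitFrom0 (X : ℕ → Ω → ℝ) (v : ℝ) (ω : Ω) : ℕ∞ :=
  ⨅ n ∈ {n : ℕ | v ≤ X n ω}, (n : ℕ∞)

/-- `T_v`: first time `n ≥ 1` with `X n ≥ v` (`⊤` if never). -/
noncomputable def hitFrom1 (X : ℕ → Ω → ℝ) (v : ℝ) (ω : Ω) : ℕ∞ :=
  ⨅ n ∈ {n : ℕ | 1 ≤ n ∧ v ≤ X n ω}, (n : ℕ∞)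

/-- The discounted reward `e^{-qτ} g(X_τ) 1_{τ<∞}`, as an `ℝ≥0∞`-valued r.v. -/
noncomputable def payoff (q : ℝ) (g : ℝ → ℝ) (X : ℕ → Ω → ℝ) (τ : Ω → ℕ∞) (ω : Ω) : ENNReal :=
  if τ ω = ⊤ then 0
  else ENNReal.ofReal (Real.exp (-q * ((τ ω).toNat : ℝ)) * g (X ((τ ω).toNat) ω))

/-- The natural filtration (as σ-algebras) of the process `X`. -/
def natSigma [MeasurableSpace Ω] (X : ℕ → Ω → ℝ) (n : ℕ) : MeasurableSpace Ω :=
  ⨆ i ∈ Set.Iic n, MeasurableSpace.comap (X i) inferInstance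

/-- `τ` is a stopping time (with values in `ℕ ∪ {∞}`) of the natural filtration of `X`. -/
def IsStopping [MeasurableSpace Ω] (X : ℕ → Ω → ℝ) (τ : Ω → ℕ∞) : Prop :=
  ∀ n : ℕ, MeasurableSet[natSigma X n] {ω | τ ω ≤ (n : ℕ∞)}

open scoped ENNReal

namespace Stmt10Aux

/-- Partial sums of an increment sequence. -/
def psum (s : ℕ → ℝ) (n : ℕ) : ℝ := ∑ i ∈ Finset.range n, s i

/-- Shift of a sequence. -/
def shf (m : ℕ) (s : ℕ → ℝ) : ℕ → ℝ := fun j => s (m + j)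

lemma psum_add (s : ℕ → ℝ) (m j : ℕ) :
    psum s (m + j) = psum s m + psum (shf m s) j := by
  induction j with
  | zero => simp [psum]
  | succ j ih =>
      have h1 : m + (j + 1) = (m + j) + 1 := by omega
      have e1 : psum s (m + (j + 1)) = psum s (m + j) + s (m + j) := by
        rw [h1]; simp [psum, Finset.sum_range_succ]
      have e2 : psum (shf m s) (j + 1) = psum (shf m s) j + s (m + j) := by
        simp [psum, Finset.sum_range_succ, shf]
      rw [e1, e2, ih]; ring

lemma psum_congr {s s' : ℕ → ℝ} {n : ℕ} (h : ∀ i < n, s i = s' i) :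
    psum s n = psum s' n :=
  Finset.sum_congr rfl fun i hi => h i (Finset.mem_range.mp hi)

/-- `hitP a x s n`: the walk `x + psum s` first reaches level `a` at time `n`. -/
def hitP (a x : ℝ) (s : ℕ → ℝ) (n : ℕ) : Prop :=
  a ≤ x + psum s n ∧ ∀ j < n, x + psum s j < a

/-- `ladP s m`: `m ≥ 1` is the first time the partial sums are `≥ 0`. -/
def ladP (s : ℕ → ℝ) (m : ℕ) : Prop :=
  1 ≤ m ∧ 0 ≤ psum s m ∧ ∀ j, 1 ≤ j → j < m → psum s j < 0

lemma hitP_unique {a x : ℝ} {s : ℕ → ℝ} {n n' : ℕ}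
    (h : hitP a x s n) (h' : hitP a x s n') : n = n' := by
  rcases lt_trichotomy n n' with hl | he | hl
  · exact absurd h.1 (not_le.mpr (h'.2 n hl))
  · exact he
  · exact absurd h'.1 (not_le.mpr (h.2 n' hl))

lemma ladP_unique {s : ℕ → ℝ} {m m' : ℕ}
    (h : ladP s m) (h' : ladP s m') : m = m' := by
  rcases lt_trichotomy m m' with hl | he | hl
  · exact absurd h.2.1 (not_le.mpr (h'.2.2 m h.1 hl))
  · exact he
  · exact absurd h'.2.1 (not_le.mpr (h.2.2 m' h'.1 hl))

lemma hitP_congr {a x : ℝ} {s s' : ℕ → ℝ} {n : ℕ} (h : ∀ i < n, s i = s' i) :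
    hitP a x s n ↔ hitP a x s' n := by
  unfold hitP
  rw [psum_congr h]
  constructor <;> rintro ⟨h1, h2⟩ <;> refine ⟨h1, fun j hj => ?_⟩
  · rw [← psum_congr (fun i hi => h i (hi.trans hj))]; exact h2 j hj
  · rw [psum_congr (fun i hi => h i (hi.trans hj))]; exact h2 j hj

lemma ladP_congr {s s' : ℕ → ℝ} {m : ℕ} (h : ∀ i < m, s i = s' i) :
    ladP s m ↔ ladP s' m := by
  unfold ladP
  rw [psum_congr h]
  constructor <;> rintro ⟨h1, h2, h3⟩ <;> refine ⟨h1, h2, fun j hj1 hj2 => ?_⟩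
  · rw [← psum_congr (fun i hi => h i (hi.trans hj2))]; exact h3 j hj1 hj2
  · rw [psum_congr (fun i hi => h i (hi.trans hj2))]; exact h3 j hj1 hj2

/-- The discounted reward value at time `n`. -/
noncomputable def wgt (q : ℝ) (g : ℝ → ℝ) (x : ℝ) (s : ℕ → ℝ) (n : ℕ) : ℝ≥0∞ :=
  ENNReal.ofReal (Real.exp (-q * n) * g (x + psum s n))

open Classical in
/-- Truncated payoff for the first passage above `a`. -/
noncomputable def pfn (a q : ℝ) (g : ℝ → ℝ) (N : ℕ) (x : ℝ) (s : ℕ → ℝ) : ℝ≥0∞ :=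
  ∑ n ∈ Finset.range (N + 1), if hitP a x s n then wgt q g x s n else 0

open Classical in
/-- Truncated payoff for the first weak ascending ladder epoch. -/
noncomputable def qfn (q : ℝ) (g : ℝ → ℝ) (N : ℕ) (x : ℝ) (s : ℕ → ℝ) : ℝ≥0∞ :=
  ∑ m ∈ Finset.range (N + 1), if ladP s m then wgt q g x s m else 0

lemma pfn_of_hit {a q : ℝ} {g : ℝ → ℝ} {N : ℕ} {x : ℝ} {s : ℕ → ℝ} {n : ℕ}
    (hn : hitP a x s n) (hnN : n ≤ N) : pfn a q g N x s = wgt q g x s n := by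
  classical
  rw [pfn, Finset.sum_eq_single n]
  · simp [hn]
  · intro b _ hb
    rw [if_neg (fun hb' => hb (hitP_unique hb' hn))]
  · intro h; exact absurd (Finset.mem_range.mpr (Nat.lt_succ_of_le hnN)) h

lemma pfn_of_no_hit {a q : ℝ} {g : ℝ → ℝ} {N : ℕ} {x : ℝ} {s : ℕ → ℝ}
    (h : ∀ n ≤ N, ¬ hitP a x s n) : pfn a q g N x s = 0 := by
  classical
  rw [pfn, Finset.sum_eq_zero]
  intro n hn
  rw [if_neg (h n (Nat.lt_succ_iff.mp (Finset.mem_range.mp hn)))]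

lemma qfn_of_lad {q : ℝ} {g : ℝ → ℝ} {N : ℕ} {x : ℝ} {s : ℕ → ℝ} {m : ℕ}
    (hm : ladP s m) (hmN : m ≤ N) : qfn q g N x s = wgt q g x s m := by
  classical
  rw [qfn, Finset.sum_eq_single m]
  · simp [hm]
  · intro b _ hb
    rw [if_neg (fun hb' => hb (ladP_unique hb' hm))]
  · intro h; exact absurd (Finset.mem_range.mpr (Nat.lt_succ_of_le hmN)) h

lemma qfn_of_no_lad {q : ℝ} {g : ℝ → ℝ} {N : ℕ} {x : ℝ} {s : ℕ → ℝ}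
    (h : ∀ m ≤ N, ¬ ladP s m) : qfn q g N x s = 0 := by
  classical
  rw [qfn, Finset.sum_eq_zero]
  intro m hm
  rw [if_neg (h m (Nat.lt_succ_iff.mp (Finset.mem_range.mp hm)))]

lemma pfn_congr {a q : ℝ} {g : ℝ → ℝ} {N : ℕ} {x : ℝ} {s s' : ℕ → ℝ}
    (h : ∀ i < N, s i = s' i) : pfn a q g N x s = pfn a q g N x s' := by
  classical
  refine Finset.sum_congr rfl fun n hn => ?_
  have hnN : n ≤ N := Nat.lt_succ_iff.mp (Finset.mem_range.mp hn)
  have hco : ∀ i < n, s i = s' i := fun i hi => h i (lt_of_lt_of_le hi hnN)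
  rw [hitP_congr (a := a) (x := x) hco]
  by_cases hh : hitP a x s' n
  · rw [if_pos hh, if_pos hh, wgt, wgt, psum_congr hco]
  · rw [if_neg hh, if_neg hh]

lemma pfn_mono {a q : ℝ} {g : ℝ → ℝ} {x : ℝ} {s : ℕ → ℝ} :
    Monotone fun N => pfn a q g N x s := by
  classical
  refine monotone_nat_of_le_succ fun N => ?_
  rw [pfn, pfn, Finset.sum_range_succ (n := N + 1)]
  exact le_self_add


lemma wgt_split {q : ℝ} {g : ℝ → ℝ} {x : ℝ} {s : ℕ → ℝ} {m n : ℕ} (hm : m ≤ n) :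
    wgt q g x s n
      = ENNReal.ofReal (Real.exp (-q * m)) * wgt q g (x + psum s m) (shf m s) (n - m) := by
  rw [wgt, wgt, ← ENNReal.ofReal_mul (Real.exp_nonneg _), ← mul_assoc, ← Real.exp_add]
  have h1 : -q * (m : ℝ) + -q * ((n - m : ℕ) : ℝ) = -q * (n : ℝ) := by
    rw [Nat.cast_sub hm]; ring
  have h2 : x + psum s m + psum (shf m s) (n - m) = x + psum s n := by
    have := psum_add s m (n - m)
    rw [Nat.add_sub_cancel' hm] at this
    rw [this]; ring
  rw [h1, h2]

lemma hitP_comp {a x : ℝ} {s : ℕ → ℝ} {m j : ℕ} (hxa : x < a)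
    (hl : ladP s m) (hh : hitP a (x + psum s m) (shf m s) j) : hitP a x s (m + j) := by
  constructor
  · have := hh.1
    rw [psum_add s m j]; linarith
  · intro i hi
    rcases Nat.lt_or_ge i m with him | him
    · rcases Nat.eq_zero_or_pos i with h0 | h0
      · simp [h0, psum]; exact hxa
      · have := hl.2.2 i h0 him
        linarith
    · obtain ⟨i', rfl⟩ := Nat.exists_eq_add_of_le him
      have hi' : i' < j := by omega
      have := hh.2 i' hi'
      rw [psum_add s m i']; linarith

lemma hit_to_lad {a x : ℝ} {s : ℕ → ℝ} {n : ℕ} (hxa : x < a) (hh : hitP a x s n) :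
    ∃ m, ladP s m ∧ m ≤ n ∧ hitP a (x + psum s m) (shf m s) (n - m) := by
  have hn1 : 1 ≤ n := by
    rcases Nat.eq_zero_or_pos n with h0 | h0
    · exfalso; have := hh.1; rw [h0] at this; simp [psum] at this; linarith
    · exact h0
  have hex : ∃ m, 1 ≤ m ∧ 0 ≤ psum s m := by
    refine ⟨n, hn1, ?_⟩
    have := hh.1; linarith
  classical
  let m := Nat.find hex
  have hspec := Nat.find_spec hex
  have hmin : ∀ j < m, ¬ (1 ≤ j ∧ 0 ≤ psum s j) := fun j hj => Nat.find_min hex hj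
  have hlad : ladP s m := by
    refine ⟨hspec.1, hspec.2, fun j hj1 hj2 => ?_⟩
    have := hmin j hj2
    push_neg at this
    exact this hj1
  have hmn : m ≤ n := Nat.find_min' hex ⟨hn1, by have := hh.1; linarith⟩
  refine ⟨m, hlad, hmn, ?_, ?_⟩
  · have h2 : x + psum s m + psum (shf m s) (n - m) = x + psum s n := by
      have := psum_add s m (n - m)
      rw [Nat.add_sub_cancel' hmn] at this
      rw [this]; ring
    rw [h2]; exact hh.1
  · intro i hi
    have h2 : x + psum s m + psum (shf m s) i = x + psum s (m + i) := by
      rw [psum_add s m i]; ring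
    rw [h2]
    exact hh.2 (m + i) (by omega)

open Classical in
lemma pfn_decomp {a q : ℝ} {g : ℝ → ℝ} {N : ℕ} {x : ℝ} {s : ℕ → ℝ} (hxa : x < a) :
    pfn a q g N x s
      = ∑ m ∈ Finset.range (N + 1),
          if ladP s m then
            ENNReal.ofReal (Real.exp (-q * m)) * pfn a q g (N - m) (x + psum s m) (shf m s)
          else 0 := by
  classical
  by_cases h : ∃ n, n ≤ N ∧ hitP a x s n
  · obtain ⟨n, hnN, hn⟩ := h
    obtain ⟨m, hlad, hmn, hshift⟩ := hit_to_lad hxa hn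
    rw [pfn_of_hit hn hnN, Finset.sum_eq_single m]
    · rw [if_pos hlad, pfn_of_hit hshift (by omega), ← wgt_split hmn]
    · intro b _ hb
      rw [if_neg (fun hb' => hb (ladP_unique hb' hlad))]
    · intro hmem
      exact absurd (Finset.mem_range.mpr (by omega)) hmem
  · push_neg at h
    rw [pfn_of_no_hit (fun n hn => h n hn), Finset.sum_eq_zero]
    intro m hm
    by_cases hlad : ladP s m
    · rw [if_pos hlad, pfn_of_no_hit, mul_zero]
      intro j hj hhit
      exact h (m + j) (by have := Finset.mem_range.mp hm; omega) (hitP_comp hxa hlad hhit)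
    · rw [if_neg hlad]

lemma measurable_psum (n : ℕ) : Measurable fun s : ℕ → ℝ => psum s n := by
  unfold psum
  exact Finset.measurable_sum _ fun i _ => measurable_pi_apply i

lemma measurableSet_hitP (a : ℝ) (n : ℕ) :
    MeasurableSet {p : ℝ × (ℕ → ℝ) | hitP a p.1 p.2 n} := by
  have hf : ∀ j : ℕ, Measurable fun p : ℝ × (ℕ → ℝ) => p.1 + psum p.2 j :=
    fun j => measurable_fst.add ((measurable_psum j).comp measurable_snd)
  have : {p : ℝ × (ℕ → ℝ) | hitP a p.1 p.2 n}
      = {p : ℝ × (ℕ → ℝ) | a ≤ p.1 + psum p.2 n}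
        ∩ ⋂ j ∈ Finset.range n, {p : ℝ × (ℕ → ℝ) | p.1 + psum p.2 j < a} := by
    ext p
    simp only [Set.mem_setOf_eq, Set.mem_inter_iff, Set.mem_iInter, Finset.mem_range, hitP]
  rw [this]
  exact ((measurableSet_le measurable_const (hf n))).inter
    (MeasurableSet.biInter (Finset.range n).countable_toSet
      fun j _ => measurableSet_lt (hf j) measurable_const)

lemma measurable_wgt {g : ℝ → ℝ} (hg : Measurable g) (q : ℝ) (n : ℕ) :
    Measurable fun p : ℝ × (ℕ → ℝ) => wgt q g p.1 p.2 n := by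
  unfold wgt
  exact ENNReal.measurable_ofReal.comp
    ((measurable_const.mul (hg.comp
      (measurable_fst.add ((measurable_psum n).comp measurable_snd)))))

open Classical in
lemma measurable_pfn {g : ℝ → ℝ} (hg : Measurable g) (a q : ℝ) (N : ℕ) :
    Measurable fun p : ℝ × (ℕ → ℝ) => pfn a q g N p.1 p.2 := by
  unfold pfn
  refine Finset.measurable_sum _ fun n _ => Measurable.ite (measurableSet_hitP a n)
    (measurable_wgt hg q n) measurable_const

lemma measurableSet_ladP (m : ℕ) : MeasurableSet {s : ℕ → ℝ | ladP s m} := by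
  by_cases hm : 1 ≤ m
  · have : {s : ℕ → ℝ | ladP s m}
        = {s : ℕ → ℝ | 0 ≤ psum s m}
          ∩ ⋂ j ∈ Finset.Ico 1 m, {s : ℕ → ℝ | psum s j < 0} := by
      ext s
      simp only [Set.mem_setOf_eq, Set.mem_inter_iff, Set.mem_iInter, Finset.mem_Ico, ladP]
      constructor
      · rintro ⟨_, h2, h3⟩; exact ⟨h2, fun j hj => h3 j hj.1 hj.2⟩
      · rintro ⟨h2, h3⟩; exact ⟨hm, h2, fun j hj1 hj2 => h3 j ⟨hj1, hj2⟩⟩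
    rw [this]
    exact (measurableSet_le measurable_const (measurable_psum m)).inter
      (MeasurableSet.biInter (Finset.Ico 1 m).countable_toSet
        fun j _ => measurableSet_lt (measurable_psum j) measurable_const)
  · have : {s : ℕ → ℝ | ladP s m} = ∅ := by
      ext s; simp only [Set.mem_setOf_eq, Set.mem_empty_iff_false, iff_false, ladP]
      rintro ⟨h1, _, _⟩; exact hm h1
    rw [this]; exact MeasurableSet.empty

open Classical in
lemma measurable_qfn {g : ℝ → ℝ} (hg : Measurable g) (q x : ℝ) (N : ℕ) :
    Measurable fun s : ℕ → ℝ => qfn q g N x s := by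
  unfold qfn
  refine Finset.measurable_sum _ fun m _ => Measurable.ite (measurableSet_ladP m)
    ((measurable_wgt hg q m).comp (measurable_const.prodMk measurable_id))
    measurable_const

/-- Extend a finite vector to a sequence by zero. -/
def extv (m : ℕ) (u : Fin m → ℝ) : ℕ → ℝ := fun j => if h : j < m then u ⟨j, h⟩ else 0

lemma measurable_extv (m : ℕ) : Measurable (extv m) := by
  refine measurable_pi_lambda _ fun j => ?_
  by_cases h : j < m
  · simpa [extv, h] using measurable_pi_apply (⟨j, h⟩ : Fin m)
  · simpa [extv, h] using measurable_const

lemma extv_eq {m : ℕ} {u : Fin m → ℝ} {j : ℕ} (h : j < m) : extv m u j = u ⟨j, h⟩ := dif_pos h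

section Indep

variable {Ω : Type*} [MeasurableSpace Ω] (μ : Measure Ω) [IsProbabilityMeasure μ]
  (ξ : ℕ → Ω → ℝ)

lemma vecLaw (hmeas : ∀ i, Measurable (ξ i))
    (hindep : iIndepFun ξ μ)
    (hident : ∀ i, μ.map (ξ i) = μ.map (ξ 1))
    {ι : Type*} [Fintype ι] (c : ι → ℕ) (hc : Function.Injective c) :
    μ.map (fun ω (i : ι) => ξ (c i) ω) = Measure.pi (fun _ => μ.map (ξ 1)) := by
  classical
  haveI : IsProbabilityMeasure (μ.map (ξ 1)) :=
    Measure.isProbabilityMeasure_map (hmeas 1).aemeasurable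
  have hV : Measurable fun ω (i : ι) => ξ (c i) ω :=
    measurable_pi_lambda _ fun i => hmeas _
  refine (Measure.pi_eq fun s hs => ?_).symm
  rw [Measure.map_apply hV (MeasurableSet.univ_pi hs)]
  set sets : ℕ → Set ℝ := fun j => if h : ∃ i, c i = j then s h.choose else Set.univ with hsets
  have hsets_c : ∀ i, sets (c i) = s i := by
    intro i
    have hex : ∃ i', c i' = c i := ⟨i, rfl⟩
    simp only [hsets, dif_pos hex]
    exact congrArg s (hc hex.choose_spec)
  have hsets_m : ∀ j, MeasurableSet (sets j) := by
    intro j; by_cases h : ∃ i, c i = j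
    · simp only [hsets, dif_pos h]; exact hs _
    · simp only [hsets, dif_neg h]; exact MeasurableSet.univ
  have key := hindep.measure_inter_preimage_eq_mul (Finset.univ.image c)
    (sets := sets) (fun j _ => hsets_m j)
  have hpre : (fun ω (i : ι) => ξ (c i) ω) ⁻¹' (Set.univ.pi s)
      = ⋂ j ∈ Finset.univ.image c, ξ j ⁻¹' sets j := by
    ext ω
    simp only [Set.mem_preimage, Set.mem_univ_pi, Set.mem_iInter, Finset.mem_image,
      Finset.mem_univ, true_and]
    constructor
    · rintro h j ⟨i, rfl⟩
      rw [hsets_c i]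
      exact h i
    · intro h i
      have := h (c i) ⟨i, rfl⟩
      rwa [hsets_c i] at this
  rw [hpre, key, Finset.prod_image (fun i _ j _ h => hc h)]
  refine Finset.prod_congr rfl fun i _ => ?_
  rw [hsets_c i, ← Measure.map_apply (hmeas (c i)) (hs i), hident (c i)]

lemma master (hmeas : ∀ i, Measurable (ξ i))
    (hindep : iIndepFun ξ μ)
    (hident : ∀ i, μ.map (ξ i) = μ.map (ξ 1))
    (m k : ℕ) (ψ : (Fin m → ℝ) → (Fin k → ℝ) → ℝ≥0∞)
    (hψ : Measurable fun p : (Fin m → ℝ) × (Fin k → ℝ) => ψ p.1 p.2) :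
    ∫⁻ ω, ψ (fun i => ξ ((i : ℕ) + 1) ω) (fun i => ξ (m + (i : ℕ) + 1) ω) ∂μ
      = ∫⁻ ω, ∫⁻ ω', ψ (fun i => ξ ((i : ℕ) + 1) ω) (fun i => ξ ((i : ℕ) + 1) ω') ∂μ ∂μ := by
  set ν := μ.map (ξ 1) with hν
  haveI : IsProbabilityMeasure ν := Measure.isProbabilityMeasure_map (hmeas 1).aemeasurable
  set c₀ : Fin m ⊕ Fin k → ℕ := Sum.elim (fun i => (i : ℕ) + 1) (fun i => m + (i : ℕ) + 1)
    with hc₀def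
  have hc₀ : Function.Injective c₀ := by
    rintro (i | i) (j | j) h <;>
      simp only [hc₀def, Sum.elim_inl, Sum.elim_inr] at h
    · exact congrArg Sum.inl (Fin.ext (by omega))
    · exact absurd h (by have := i.isLt; omega)
    · exact absurd h (by have := j.isLt; omega)
    · exact congrArg Sum.inr (Fin.ext (by omega))
  have hinjm : Function.Injective (fun i : Fin m => (i : ℕ) + 1) := by
    intro i j h
    have h' : (i : ℕ) + 1 = (j : ℕ) + 1 := h
    exact Fin.ext (by omega)
  have hinjk : Function.Injective (fun i : Fin k => (i : ℕ) + 1) := by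
    intro i j h
    have h' : (i : ℕ) + 1 = (j : ℕ) + 1 := h
    exact Fin.ext (by omega)
  have lawU := vecLaw μ ξ hmeas hindep hident c₀ hc₀
  have law1 := vecLaw μ ξ hmeas hindep hident (fun i : Fin m => (i : ℕ) + 1) hinjm
  have law2 := vecLaw μ ξ hmeas hindep hident (fun i : Fin k => (i : ℕ) + 1) hinjk
  set Φ := MeasurableEquiv.sumPiEquivProdPi (fun _ : Fin m ⊕ Fin k => ℝ) with hΦ
  have hUmeas : Measurable fun ω (j : Fin m ⊕ Fin k) => ξ (c₀ j) ω :=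
    measurable_pi_lambda _ fun j => hmeas _
  have hV1 : Measurable fun ω (i : Fin m) => ξ ((i : ℕ) + 1) ω :=
    measurable_pi_lambda _ fun i => hmeas _
  have hV2 : Measurable fun ω (i : Fin k) => ξ ((i : ℕ) + 1) ω :=
    measurable_pi_lambda _ fun i => hmeas _
  have hΦψ : Measurable fun u : Fin m ⊕ Fin k → ℝ => ψ (Φ u).1 (Φ u).2 :=
    hψ.comp Φ.measurable
  have mp : MeasurePreserving Φ (Measure.pi fun _ : Fin m ⊕ Fin k => ν)
      ((Measure.pi fun _ : Fin m => ν).prod (Measure.pi fun _ : Fin k => ν)) := by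
    have h1 := (measurePreserving_sumPiEquivProdPi_symm
      (fun _ : Fin m ⊕ Fin k => ν)).symm Φ.symm
    simpa using h1
  calc ∫⁻ ω, ψ (fun i => ξ ((i : ℕ) + 1) ω) (fun i => ξ (m + (i : ℕ) + 1) ω) ∂μ
      = ∫⁻ u, ψ (Φ u).1 (Φ u).2 ∂(μ.map (fun ω (j : Fin m ⊕ Fin k) => ξ (c₀ j) ω)) :=
        (lintegral_map hΦψ hUmeas).symm
    _ = ∫⁻ u, ψ (Φ u).1 (Φ u).2 ∂(Measure.pi fun _ : Fin m ⊕ Fin k => ν) := by rw [lawU]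
    _ = ∫⁻ p : (Fin m → ℝ) × (Fin k → ℝ), ψ p.1 p.2
          ∂((Measure.pi fun _ : Fin m => ν).prod (Measure.pi fun _ : Fin k => ν)) :=
        mp.lintegral_comp hψ
    _ = ∫⁻ u, ∫⁻ v, ψ u v ∂(Measure.pi fun _ : Fin k => ν)
          ∂(Measure.pi fun _ : Fin m => ν) := lintegral_prod _ hψ.aemeasurable
    _ = ∫⁻ u, ∫⁻ v, ψ u v ∂(Measure.pi fun _ : Fin k => ν)
          ∂(μ.map (fun ω (i : Fin m) => ξ ((i : ℕ) + 1) ω)) := by rw [law1]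
    _ = ∫⁻ ω, ∫⁻ v, ψ (fun i => ξ ((i : ℕ) + 1) ω) v
          ∂(Measure.pi fun _ : Fin k => ν) ∂μ :=
        lintegral_map hψ.lintegral_prod_right' hV1
    _ = ∫⁻ ω, ∫⁻ ω', ψ (fun i => ξ ((i : ℕ) + 1) ω) (fun i => ξ ((i : ℕ) + 1) ω') ∂μ ∂μ := by
        refine lintegral_congr fun ω => ?_
        rw [← law2]
        have hψu : Measurable fun v : Fin k → ℝ => ψ (fun i => ξ ((i : ℕ) + 1) ω) v :=
          hψ.comp (measurable_const.prodMk measurable_id)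
        exact lintegral_map hψu hV2

end Indep

lemma ratio_ineq {g : ℝ → ℝ} (hg0 : ∀ t, 0 ≤ g t) (hgmono : Monotone g)
    (hglc : ∀ a b θ : ℝ, 0 < θ → θ < 1 →
      g a ^ θ * g b ^ (1 - θ) ≤ g (θ * a + (1 - θ) * b))
    {y x t : ℝ} (hgy : 0 < g y) (hyx : y ≤ x) (ht : 0 ≤ t) :
    g y * g (x + t) ≤ g x * g (y + t) := by
  rcases eq_or_lt_of_le hyx with rfl | hyx
  · exact le_of_eq rfl
  rcases eq_or_lt_of_le ht with rfl | ht
  · simp only [add_zero]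
    exact le_of_eq (mul_comm _ _)
  · set d := x - y + t with hd
    have hd0 : 0 < d := by simp only [hd]; linarith
    set θ := t / d with hθ
    have hθ0 : 0 < θ := div_pos ht hd0
    have hθ1 : θ < 1 := by rw [hθ, div_lt_one hd0]; simp only [hd]; linarith
    have h1 := hglc y (x + t) θ hθ0 hθ1
    have h2 := hglc y (x + t) (1 - θ) (by linarith) (by linarith)
    have e1 : θ * y + (1 - θ) * (x + t) = x := by
      rw [hθ]; field_simp [hd]; ring
    have e2 : (1 - θ) * y + (1 - (1 - θ)) * (x + t) = y + t := by
      rw [hθ]; field_simp [hd]; ring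
    rw [e1] at h1
    rw [e2] at h2
    have hgxt : 0 < g (x + t) := lt_of_lt_of_le hgy (hgmono (by linarith))
    have key : (g y ^ θ * g (x + t) ^ (1 - θ)) * (g y ^ (1 - θ) * g (x + t) ^ (1 - (1 - θ)))
        = g y * g (x + t) := by
      rw [mul_mul_mul_comm, ← Real.rpow_add hgy, ← Real.rpow_add hgxt]
      norm_num
    calc g y * g (x + t) = _ := key.symm
      _ ≤ g x * g (y + t) := mul_le_mul h1 h2 (by positivity) (hg0 x)

lemma biInf_coe_eq {A : Set ℕ} {m : ℕ} (h1 : m ∈ A) (h2 : ∀ n ∈ A, m ≤ n) :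
    (⨅ n ∈ A, (n : ℕ∞)) = m :=
  le_antisymm (iInf₂_le m h1) (le_iInf₂ fun n hn => by exact_mod_cast h2 n hn)

lemma payoff_tau_eq_iSup {Ω : Type*} (a q y : ℝ) (g : ℝ → ℝ) (ξ : ℕ → Ω → ℝ) (ω : Ω) :
    payoff q g (walk y ξ) (hitFrom0 (walk y ξ) a) ω
      = ⨆ N, pfn a q g N y (fun n => ξ (n + 1) ω) := by
  classical
  set s : ℕ → ℝ := fun n => ξ (n + 1) ω with hs
  have hwalk : ∀ n, walk y ξ n ω = y + psum s n := fun n => rfl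
  by_cases h : ∃ n, a ≤ y + psum s n
  · set n₀ := Nat.find h with hn₀
    have hspec : a ≤ y + psum s n₀ := Nat.find_spec h
    have hmin : ∀ j < n₀, ¬ a ≤ y + psum s j := fun j hj => Nat.find_min h hj
    have hhit : hitP a y s n₀ := ⟨hspec, fun j hj => not_le.mp (hmin j hj)⟩
    have hτ : hitFrom0 (walk y ξ) a ω = (n₀ : ℕ∞) := by
      refine biInf_coe_eq ?_ ?_
      · show a ≤ walk y ξ n₀ ω
        rw [hwalk]; exact hspec
      · intro n hn
        by_contra hc
        push_neg at hc
        exact hmin n hc (by rw [← hwalk]; exact hn)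
    have hpay : payoff q g (walk y ξ) (hitFrom0 (walk y ξ) a) ω = wgt q g y s n₀ := by
      rw [payoff, hτ, if_neg (by simp : ¬ ((n₀ : ℕ∞) = ⊤))]
      simp only [ENat.toNat_coe]
      rw [wgt, hwalk]
    have hsup : (⨆ N, pfn a q g N y s) = wgt q g y s n₀ := by
      refine le_antisymm (iSup_le fun N => ?_) ?_
      · by_cases hN : ∃ n ≤ N, hitP a y s n
        · obtain ⟨n, hnN, hh⟩ := hN
          rw [pfn_of_hit hh hnN, hitP_unique hh hhit]
        · push_neg at hN
          rw [pfn_of_no_hit hN]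
          exact zero_le
      · rw [← pfn_of_hit hhit (le_refl n₀)]
        exact le_iSup (fun N => pfn a q g N y s) n₀
    rw [hpay, hsup]
  · push_neg at h
    have hempty : {n : ℕ | a ≤ walk y ξ n ω} = ∅ := by
      ext n
      simp only [Set.mem_setOf_eq, Set.mem_empty_iff_false, iff_false, not_le]
      rw [hwalk]; exact h n
    have hτ : hitFrom0 (walk y ξ) a ω = ⊤ := by
      rw [hitFrom0, hempty]; simp
    have hpay : payoff q g (walk y ξ) (hitFrom0 (walk y ξ) a) ω = 0 := by
      rw [payoff, hτ, if_pos rfl]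
    have hz : ∀ N, pfn a q g N y s = 0 :=
      fun N => pfn_of_no_hit fun n _ hh => absurd hh.1 (not_le.mpr (h n))
    rw [hpay]
    simp [hz]

lemma qfn_le_payoff_T {Ω : Type*} (q y : ℝ) (g : ℝ → ℝ) (ξ : ℕ → Ω → ℝ) (N : ℕ) (ω : Ω) :
    qfn q g N y (fun n => ξ (n + 1) ω)
      ≤ payoff q g (walk y ξ) (hitFrom1 (walk y ξ) y) ω := by
  classical
  set s : ℕ → ℝ := fun n => ξ (n + 1) ω with hs
  have hwalk : ∀ n, walk y ξ n ω = y + psum s n := fun n => rfl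
  by_cases h : ∃ m ≤ N, ladP s m
  · obtain ⟨m, hmN, hl⟩ := h
    have hτ : hitFrom1 (walk y ξ) y ω = (m : ℕ∞) := by
      refine biInf_coe_eq ?_ ?_
      · refine ⟨hl.1, ?_⟩
        rw [hwalk]
        linarith [hl.2.1]
      · rintro n ⟨hn1, hn2⟩
        rw [hwalk] at hn2
        by_contra hc
        push_neg at hc
        have := hl.2.2 n hn1 hc
        linarith
    have hpay : payoff q g (walk y ξ) (hitFrom1 (walk y ξ) y) ω = wgt q g y s m := by
      rw [payoff, hτ, if_neg (by simp : ¬ ((m : ℕ∞) = ⊤))]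
      simp only [ENat.toNat_coe]
      rw [wgt, hwalk]
    rw [qfn_of_lad hl hmN, hpay]
  · push_neg at h
    rw [qfn_of_no_lad h]
    exact zero_le

section Main

variable {Ω : Type*} [MeasurableSpace Ω] (μ : Measure Ω) [IsProbabilityMeasure μ]
  (ξ : ℕ → Ω → ℝ)

lemma extended_stop (hmeas : ∀ i, Measurable (ξ i))
    (q : ℝ) (g : ℝ → ℝ) (hgm : Measurable g) (hg0 : ∀ t, 0 ≤ g t) (hgmono : Monotone g)
    (hglc : ∀ a b θ : ℝ, 0 < θ → θ < 1 →
      g a ^ θ * g b ^ (1 - θ) ≤ g (θ * a + (1 - θ) * b))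
    (y : ℝ) (hgy : 0 < g y)
    (hstop : (∫⁻ ω, payoff q g (walk y ξ) (hitFrom1 (walk y ξ) y) ω ∂μ)
      ≤ ENNReal.ofReal (g y))
    (x : ℝ) (hyx : y ≤ x) (N : ℕ) :
    ∫⁻ ω, qfn q g N x (fun n => ξ (n + 1) ω) ∂μ ≤ ENNReal.ofReal (g x) := by
  classical
  have hincr : Measurable fun ω : Ω => (fun n => ξ (n + 1) ω) :=
    measurable_pi_lambda _ fun n => hmeas (n + 1)
  have hpt : ∀ s : ℕ → ℝ,
      qfn q g N x s * ENNReal.ofReal (g y) ≤ ENNReal.ofReal (g x) * qfn q g N y s := by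
    intro s
    rw [qfn, qfn, Finset.sum_mul, Finset.mul_sum]
    refine Finset.sum_le_sum fun m _ => ?_
    by_cases hl : ladP s m
    · rw [if_pos hl, if_pos hl, wgt, wgt,
        ← ENNReal.ofReal_mul (mul_nonneg (Real.exp_nonneg _) (hg0 _)),
        ← ENNReal.ofReal_mul (hg0 x)]
      refine ENNReal.ofReal_le_ofReal ?_
      have hr := ratio_ineq hg0 hgmono hglc hgy hyx hl.2.1
      have he := Real.exp_nonneg (-q * (m : ℝ))
      nlinarith [mul_le_mul_of_nonneg_left hr he]
    · rw [if_neg hl, if_neg hl, zero_mul, mul_zero]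
  have hmqx : Measurable fun ω : Ω => qfn q g N x (fun n => ξ (n + 1) ω) :=
    (measurable_qfn hgm q x N).comp hincr
  have hmqy : Measurable fun ω : Ω => qfn q g N y (fun n => ξ (n + 1) ω) :=
    (measurable_qfn hgm q y N).comp hincr
  have h1 : (∫⁻ ω, qfn q g N x (fun n => ξ (n + 1) ω) ∂μ) * ENNReal.ofReal (g y)
      ≤ ENNReal.ofReal (g x) * ∫⁻ ω, qfn q g N y (fun n => ξ (n + 1) ω) ∂μ := by
    rw [← lintegral_mul_const _ hmqx, ← lintegral_const_mul _ hmqy]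
    exact lintegral_mono fun ω => hpt _
  have h2 : (∫⁻ ω, qfn q g N y (fun n => ξ (n + 1) ω) ∂μ) ≤ ENNReal.ofReal (g y) :=
    le_trans (lintegral_mono fun ω => qfn_le_payoff_T q y g ξ N ω) hstop
  have h3 : (∫⁻ ω, qfn q g N x (fun n => ξ (n + 1) ω) ∂μ) * ENNReal.ofReal (g y)
      ≤ ENNReal.ofReal (g x) * ENNReal.ofReal (g y) :=
    h1.trans (mul_le_mul_right h2 _)
  exact (ENNReal.mul_le_mul_iff_left
    ((ENNReal.ofReal_pos.mpr hgy).ne') ENNReal.ofReal_ne_top).mp h3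

open Classical in
lemma restart_bound (hmeas : ∀ i, Measurable (ξ i))
    (hindep : iIndepFun ξ μ)
    (hident : ∀ i, μ.map (ξ i) = μ.map (ξ 1))
    (q a : ℝ) (g : ℝ → ℝ) (hgm : Measurable g) (y : ℝ) (m k : ℕ) (x : ℝ) (hyx : y ≤ x)
    (hIH : ∀ z : ℝ, y ≤ z →
      (∫⁻ ω, pfn a q g k z (fun n => ξ (n + 1) ω) ∂μ) ≤ ENNReal.ofReal (g z)) :
    (∫⁻ ω, (if ladP (fun n => ξ (n + 1) ω) m then
        ENNReal.ofReal (Real.exp (-q * m)) *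
          pfn a q g k (x + psum (fun n => ξ (n + 1) ω) m) (shf m (fun n => ξ (n + 1) ω))
      else 0) ∂μ)
    ≤ ∫⁻ ω, (if ladP (fun n => ξ (n + 1) ω) m then wgt q g x (fun n => ξ (n + 1) ω) m
        else 0) ∂μ := by
  classical
  have hincr : Measurable fun ω : Ω => (fun n => ξ (n + 1) ω) :=
    measurable_pi_lambda _ fun n => hmeas (n + 1)
  set ψ : (Fin m → ℝ) → (Fin k → ℝ) → ℝ≥0∞ := fun u v =>
    if ladP (extv m u) m then
      ENNReal.ofReal (Real.exp (-q * m)) *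
        pfn a q g k (x + psum (extv m u) m) (extv k v)
    else 0 with hψdef
  have hψ : Measurable fun p : (Fin m → ℝ) × (Fin k → ℝ) => ψ p.1 p.2 := by
    refine Measurable.ite ?_ ?_ measurable_const
    · exact ((measurable_extv m).comp measurable_fst) (measurableSet_ladP m)
    · have hpair : Measurable fun p : (Fin m → ℝ) × (Fin k → ℝ) =>
          ((x + psum (extv m p.1) m, extv k p.2) : ℝ × (ℕ → ℝ)) :=
        (measurable_const.add
          (((measurable_psum m).comp (measurable_extv m)).comp measurable_fst)).prodMk
          ((measurable_extv k).comp measurable_snd)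
      exact Measurable.const_mul ((measurable_pfn hgm a q k).comp hpair) _
  have hintg : ∀ ω : Ω,
      (if ladP (fun n => ξ (n + 1) ω) m then
        ENNReal.ofReal (Real.exp (-q * m)) *
          pfn a q g k (x + psum (fun n => ξ (n + 1) ω) m) (shf m (fun n => ξ (n + 1) ω))
      else 0)
      = ψ (fun i : Fin m => ξ ((i : ℕ) + 1) ω) (fun i : Fin k => ξ (m + (i : ℕ) + 1) ω) := by
    intro ω
    have hco1 : ∀ i < m, (fun n => ξ (n + 1) ω) i
        = extv m (fun i : Fin m => ξ ((i : ℕ) + 1) ω) i := fun i hi =>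
      ((extv_eq (u := fun i : Fin m => ξ ((i : ℕ) + 1) ω) hi).symm)
    have hco2 : ∀ i < k, shf m (fun n => ξ (n + 1) ω) i
        = extv k (fun i : Fin k => ξ (m + (i : ℕ) + 1) ω) i := fun i hi =>
      ((extv_eq (u := fun i : Fin k => ξ (m + (i : ℕ) + 1) ω) hi).symm)
    show _ = if ladP (extv m (fun i : Fin m => ξ ((i : ℕ) + 1) ω)) m then
        ENNReal.ofReal (Real.exp (-q * m)) *
          pfn a q g k (x + psum (extv m (fun i : Fin m => ξ ((i : ℕ) + 1) ω)) m)
            (extv k (fun i : Fin k => ξ (m + (i : ℕ) + 1) ω))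
      else 0
    refine if_congr (ladP_congr hco1) ?_ rfl
    rw [psum_congr hco1, pfn_congr hco2]
  calc (∫⁻ ω, (if ladP (fun n => ξ (n + 1) ω) m then
        ENNReal.ofReal (Real.exp (-q * m)) *
          pfn a q g k (x + psum (fun n => ξ (n + 1) ω) m) (shf m (fun n => ξ (n + 1) ω))
      else 0) ∂μ)
      = ∫⁻ ω, ψ (fun i : Fin m => ξ ((i : ℕ) + 1) ω)
          (fun i : Fin k => ξ (m + (i : ℕ) + 1) ω) ∂μ := lintegral_congr hintg
    _ = ∫⁻ ω, ∫⁻ ω', ψ (fun i : Fin m => ξ ((i : ℕ) + 1) ω)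
          (fun i : Fin k => ξ ((i : ℕ) + 1) ω') ∂μ ∂μ :=
        master μ ξ hmeas hindep hident m k ψ hψ
    _ ≤ ∫⁻ ω, (if ladP (fun n => ξ (n + 1) ω) m then wgt q g x (fun n => ξ (n + 1) ω) m
          else 0) ∂μ := by
        refine lintegral_mono fun ω => ?_
        have hco1 : ∀ i < m, (fun n => ξ (n + 1) ω) i
            = extv m (fun i : Fin m => ξ ((i : ℕ) + 1) ω) i := fun i hi =>
          ((extv_eq (u := fun i : Fin m => ξ ((i : ℕ) + 1) ω) hi).symm)
        by_cases hl : ladP (fun n => ξ (n + 1) ω) m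
        · have hl' : ladP (extv m (fun i : Fin m => ξ ((i : ℕ) + 1) ω)) m :=
            (ladP_congr hco1).mp hl
          have hinner : ∀ ω' : Ω,
              ψ (fun i : Fin m => ξ ((i : ℕ) + 1) ω) (fun i : Fin k => ξ ((i : ℕ) + 1) ω')
              = ENNReal.ofReal (Real.exp (-q * m)) *
                pfn a q g k (x + psum (fun n => ξ (n + 1) ω) m)
                  (fun n => ξ (n + 1) ω') := by
            intro ω'
            show (if ladP (extv m (fun i : Fin m => ξ ((i : ℕ) + 1) ω)) m then
                ENNReal.ofReal (Real.exp (-q * m)) *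
                  pfn a q g k (x + psum (extv m (fun i : Fin m => ξ ((i : ℕ) + 1) ω)) m)
                    (extv k (fun i : Fin k => ξ ((i : ℕ) + 1) ω'))
              else 0) = _
            rw [if_pos hl', ← psum_congr hco1]
            have hco3 : ∀ i < k, extv k (fun i : Fin k => ξ ((i : ℕ) + 1) ω') i
                = (fun n => ξ (n + 1) ω') i := fun i hi =>
              extv_eq (u := fun i : Fin k => ξ ((i : ℕ) + 1) ω') hi
            rw [pfn_congr hco3]
          have hz : y ≤ x + psum (fun n => ξ (n + 1) ω) m := by
            have := hl.2.1; linarith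
          rw [if_pos hl]
          calc (∫⁻ ω', ψ (fun i : Fin m => ξ ((i : ℕ) + 1) ω)
                (fun i : Fin k => ξ ((i : ℕ) + 1) ω') ∂μ)
              = ENNReal.ofReal (Real.exp (-q * m)) *
                ∫⁻ ω', pfn a q g k (x + psum (fun n => ξ (n + 1) ω) m)
                  (fun n => ξ (n + 1) ω') ∂μ := by
                rw [lintegral_congr hinner]
                exact lintegral_const_mul _
                  ((measurable_pfn hgm a q k).comp (measurable_const.prodMk hincr))
            _ ≤ ENNReal.ofReal (Real.exp (-q * m)) *
                ENNReal.ofReal (g (x + psum (fun n => ξ (n + 1) ω) m)) :=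
                mul_le_mul_right (hIH _ hz) _
            _ = wgt q g x (fun n => ξ (n + 1) ω) m := by
                rw [wgt, ← ENNReal.ofReal_mul (Real.exp_nonneg _)]
        · have hinner : ∀ ω' : Ω,
              ψ (fun i : Fin m => ξ ((i : ℕ) + 1) ω)
                (fun i : Fin k => ξ ((i : ℕ) + 1) ω') = 0 := by
            intro ω'
            show (if ladP (extv m (fun i : Fin m => ξ ((i : ℕ) + 1) ω)) m then
                ENNReal.ofReal (Real.exp (-q * m)) *
                  pfn a q g k (x + psum (extv m (fun i : Fin m => ξ ((i : ℕ) + 1) ω)) m)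
                    (extv k (fun i : Fin k => ξ ((i : ℕ) + 1) ω'))
              else 0) = 0
            rw [if_neg fun hl' => hl ((ladP_congr hco1).mpr hl')]
          rw [if_neg hl, lintegral_congr hinner, lintegral_zero]

lemma key_induction (hmeas : ∀ i, Measurable (ξ i))
    (hindep : iIndepFun ξ μ)
    (hident : ∀ i, μ.map (ξ i) = μ.map (ξ 1))
    (q : ℝ) (g : ℝ → ℝ) (hgm : Measurable g) (hg0 : ∀ t, 0 ≤ g t) (hgmono : Monotone g)
    (hglc : ∀ a b θ : ℝ, 0 < θ → θ < 1 →
      g a ^ θ * g b ^ (1 - θ) ≤ g (θ * a + (1 - θ) * b))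
    (y : ℝ) (hgy : 0 < g y)
    (hstop : (∫⁻ ω, payoff q g (walk y ξ) (hitFrom1 (walk y ξ) y) ω ∂μ)
      ≤ ENNReal.ofReal (g y))
    (a : ℝ) :
    ∀ N : ℕ, ∀ x : ℝ, y ≤ x →
      (∫⁻ ω, pfn a q g N x (fun n => ξ (n + 1) ω) ∂μ) ≤ ENNReal.ofReal (g x) := by
  classical
  have hincr : Measurable fun ω : Ω => (fun n => ξ (n + 1) ω) :=
    measurable_pi_lambda _ fun n => hmeas (n + 1)
  intro N
  induction N using Nat.strong_induction_on with
  | _ N IH =>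
    intro x hyx
    by_cases hxa : x < a
    · have hmeas_term : ∀ m : ℕ, Measurable fun ω : Ω =>
          (if ladP (fun n => ξ (n + 1) ω) m then
            ENNReal.ofReal (Real.exp (-q * m)) *
              pfn a q g (N - m) (x + psum (fun n => ξ (n + 1) ω) m)
                (shf m (fun n => ξ (n + 1) ω))
          else 0) := by
        intro m
        refine Measurable.ite (hincr (measurableSet_ladP m)) ?_ measurable_const
        have hpair : Measurable fun ω : Ω =>
            ((x + psum (fun n => ξ (n + 1) ω) m, shf m (fun n => ξ (n + 1) ω)) : ℝ × (ℕ → ℝ)) :=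
          (measurable_const.add ((measurable_psum m).comp hincr)).prodMk
            (measurable_pi_lambda _ fun j => hmeas (m + j + 1))
        exact Measurable.const_mul ((measurable_pfn hgm a q (N - m)).comp hpair) _
      have step1 : (∫⁻ ω, pfn a q g N x (fun n => ξ (n + 1) ω) ∂μ)
          = ∑ m ∈ Finset.range (N + 1), ∫⁻ ω,
              (if ladP (fun n => ξ (n + 1) ω) m then
                ENNReal.ofReal (Real.exp (-q * m)) *
                  pfn a q g (N - m) (x + psum (fun n => ξ (n + 1) ω) m)
                    (shf m (fun n => ξ (n + 1) ω))
              else 0) ∂μ := by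
        rw [← lintegral_finset_sum _ (fun m _ => hmeas_term m)]
        exact lintegral_congr fun ω => pfn_decomp hxa
      have step2 : ∀ m ∈ Finset.range (N + 1),
          (∫⁻ ω, (if ladP (fun n => ξ (n + 1) ω) m then
              ENNReal.ofReal (Real.exp (-q * m)) *
                pfn a q g (N - m) (x + psum (fun n => ξ (n + 1) ω) m)
                  (shf m (fun n => ξ (n + 1) ω))
            else 0) ∂μ)
          ≤ ∫⁻ ω, (if ladP (fun n => ξ (n + 1) ω) m then wgt q g x (fun n => ξ (n + 1) ω) m
              else 0) ∂μ := by
        intro m hm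
        rcases Nat.eq_zero_or_pos m with rfl | hm1
        · refine lintegral_mono fun ω => ?_
          rw [if_neg (fun hl : ladP _ 0 => by exact absurd hl.1 (by omega))]
          exact zero_le
        · refine restart_bound μ ξ hmeas hindep hident q a g hgm y m (N - m) x hyx ?_
          intro z hz
          exact IH (N - m) (by have := Finset.mem_range.mp hm; omega) z hz
      have step3 : (∑ m ∈ Finset.range (N + 1), ∫⁻ ω,
            (if ladP (fun n => ξ (n + 1) ω) m then wgt q g x (fun n => ξ (n + 1) ω) m
              else 0) ∂μ)
          = ∫⁻ ω, qfn q g N x (fun n => ξ (n + 1) ω) ∂μ := by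
        rw [← lintegral_finset_sum]
        · exact lintegral_congr fun ω => rfl
        · intro m _
          exact Measurable.ite (hincr (measurableSet_ladP m))
            ((measurable_wgt hgm q m).comp (measurable_const.prodMk hincr))
            measurable_const
      calc (∫⁻ ω, pfn a q g N x (fun n => ξ (n + 1) ω) ∂μ)
          = _ := step1
        _ ≤ ∑ m ∈ Finset.range (N + 1), ∫⁻ ω,
              (if ladP (fun n => ξ (n + 1) ω) m then wgt q g x (fun n => ξ (n + 1) ω) m
                else 0) ∂μ := Finset.sum_le_sum step2
        _ = ∫⁻ ω, qfn q g N x (fun n => ξ (n + 1) ω) ∂μ := step3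
        _ ≤ ENNReal.ofReal (g x) :=
            extended_stop μ ξ hmeas q g hgm hg0 hgmono hglc y hgy hstop x hyx N
    · push_neg at hxa
      have hval : ∀ s : ℕ → ℝ, pfn a q g N x s = ENNReal.ofReal (g x) := by
        intro s
        have hh : hitP a x s 0 := by
          constructor
          · simp only [psum, Finset.range_zero, Finset.sum_empty, add_zero]
            exact hxa
          · intro j hj
            exact absurd hj (Nat.not_lt_zero j)
        rw [pfn_of_hit hh (Nat.zero_le N), wgt]
        simp [psum]
      simp only [hval]
      simp [lintegral_const]

end Main
end Stmt10Aux

/-- Lemma 2.4(ii): random walk with `P(ξ>0)>0`, `q ≥ 0`, and `g`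
nonnegative, nonconstant, nondecreasing, logconcave. If
`E_y[e^{-qT_y} g(X_{T_y}) 1_{T_y<∞}] ≤ g(y)` for some `y` above
`x₀ = inf {s : g s > 0}` (i.e. `∃ s < y, g s > 0`), then
`g(y) ≥ E_y[e^{-qτ_a} g(X_{τ_a}) 1_{τ_a<∞}]` for every `a > y`. -/
theorem stmt10 [MeasurableSpace Ω] (μ : Measure Ω) [IsProbabilityMeasure μ]
    (ξ : ℕ → Ω → ℝ) (hmeas : ∀ i, Measurable (ξ i))
    (hindep : iIndepFun ξ μ)
    (hident : ∀ i, μ.map (ξ i) = μ.map (ξ 1))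
    (hξpos : 0 < μ {ω | 0 < ξ 1 ω})
    (q : ℝ) (hq : 0 ≤ q)
    (g : ℝ → ℝ) (hg0 : ∀ x, 0 ≤ g x) (hgnc : ∃ a b : ℝ, g a ≠ g b)
    (hgmono : Monotone g)
    (hglc : ∀ a b θ : ℝ, 0 < θ → θ < 1 →
      g a ^ θ * g b ^ (1 - θ) ≤ g (θ * a + (1 - θ) * b))
    (y : ℝ) (hy : ∃ s : ℝ, s < y ∧ 0 < g s)
    (hstop : (∫⁻ ω, payoff q g (walk y ξ) (hitFrom1 (walk y ξ) y) ω ∂μ)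
      ≤ ENNReal.ofReal (g y)) :
    ∀ a : ℝ, y < a →
      (∫⁻ ω, payoff q g (walk y ξ) (hitFrom0 (walk y ξ) a) ω ∂μ)
        ≤ ENNReal.ofReal (g y) := by
  intro a ha
  classical
  have hgm : Measurable g := hgmono.measurable
  obtain ⟨s₀, hs₀y, hs₀⟩ := hy
  have hgy : 0 < g y := lt_of_lt_of_le hs₀ (hgmono hs₀y.le)
  have hincr : Measurable fun ω : Ω => (fun n => ξ (n + 1) ω) :=
    measurable_pi_lambda _ fun n => hmeas (n + 1)
  have hrep : ∀ ω, payoff q g (walk y ξ) (hitFrom0 (walk y ξ) a) ω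
      = ⨆ N, Stmt10Aux.pfn a q g N y (fun n => ξ (n + 1) ω) :=
    Stmt10Aux.payoff_tau_eq_iSup a q y g ξ
  have hmeaspfn : ∀ N : ℕ,
      Measurable fun ω : Ω => Stmt10Aux.pfn a q g N y (fun n => ξ (n + 1) ω) := by
    intro N
    exact (Stmt10Aux.measurable_pfn hgm a q N).comp (measurable_const.prodMk hincr)
  have hmono : Monotone fun N : ℕ =>
      (fun ω : Ω => Stmt10Aux.pfn a q g N y (fun n => ξ (n + 1) ω)) :=
    fun N N' h ω => Stmt10Aux.pfn_mono h
  rw [lintegral_congr hrep, lintegral_iSup hmeaspfn hmono]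
  exact iSup_le fun N =>
    Stmt10Aux.key_induction μ ξ hmeas hindep hident q g hgm hg0 hgmono hglc y hgy hstop a
      N y le_rfl
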